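/- arXiv:2107.09267 — 4 statements merged into one kernel-verified Lean document; each statement's English description precedes it below -/
import Mathlib

section
/- Let P and ΔQ be symmetric positive definite real n×n matrices, let Φ_L be any real n×n matrix, and let Ψ : ℝⁿ → ℝⁿ satisfy Ψ(x) = o(‖x‖) as x → 0. Then there exists a constant α > 0 such that for all x ∈ ℝⁿ with xᵀ P x ≤ α, the quantity χ(x) := xᵀ ΔQ x − 2 Ψ(x)ᵀ P Φ_L x − Ψ(x)ᵀ P Ψ(x) is nonnegative. -/
open Matrix Asymptotics

private lemma quad_continuous {n : ℕ} (M : Matrix (Fin n) (Fin n) ℝ) :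
    Continuous fun x : Fin n → ℝ => x ⬝ᵥ (M *ᵥ x) := by
  simp only [dotProduct, mulVec]
  exact continuous_finset_sum _ fun i _ =>
    (continuous_apply i).mul (continuous_finset_sum _ fun j _ =>
      (continuous_const.mul (continuous_apply j)))

/-- Bilinear upper bound. -/
private lemma bilin_bound {n : ℕ} (M : Matrix (Fin n) (Fin n) ℝ) :
    ∃ C > (0 : ℝ), ∀ x y : Fin n → ℝ, |x ⬝ᵥ (M *ᵥ y)| ≤ C * ‖x‖ * ‖y‖ := by
  refine ⟨(∑ i, ∑ j, |M i j|) + 1, by positivity, fun x y => ?_⟩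
  have hx : ∀ i, |x i| ≤ ‖x‖ := fun i => by
    simpa using norm_le_pi_norm x i
  have hy : ∀ j, |y j| ≤ ‖y‖ := fun j => by
    simpa using norm_le_pi_norm y j
  calc |x ⬝ᵥ (M *ᵥ y)| ≤ ∑ i, ∑ j, |x i| * |M i j| * |y j| := by
        simp only [dotProduct, mulVec, Finset.mul_sum]
        refine (Finset.abs_sum_le_sum_abs _ _).trans ?_
        refine Finset.sum_le_sum fun i _ => ?_
        refine (Finset.abs_sum_le_sum_abs _ _).trans ?_
        refine Finset.sum_le_sum fun j _ => ?_
        rw [abs_mul, abs_mul]; ring_nf; rfl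
    _ ≤ ∑ i, ∑ j, ‖x‖ * |M i j| * ‖y‖ := by
        refine Finset.sum_le_sum fun i _ => Finset.sum_le_sum fun j _ => ?_
        have hxn : (0:ℝ) ≤ ‖x‖ := norm_nonneg _
        have hyn : (0:ℝ) ≤ ‖y‖ := norm_nonneg _
        exact mul_le_mul (mul_le_mul_of_nonneg_right (hx i) (abs_nonneg _)) (hy j)
          (abs_nonneg _) (by positivity)
    _ = (∑ i, ∑ j, |M i j|) * ‖x‖ * ‖y‖ := by
        rw [Finset.sum_mul, Finset.sum_mul]
        refine Finset.sum_congr rfl fun i _ => ?_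
        rw [Finset.sum_mul, Finset.sum_mul]
        refine Finset.sum_congr rfl fun j _ => ?_
        ring
    _ ≤ ((∑ i, ∑ j, |M i j|) + 1) * ‖x‖ * ‖y‖ := by
        have : (0:ℝ) ≤ ∑ i, ∑ j, |M i j| := by positivity
        nlinarith [norm_nonneg x, norm_nonneg y]

/-- Coercivity of a positive definite quadratic form. -/
private lemma posdef_coercive {n : ℕ} {M : Matrix (Fin n) (Fin n) ℝ}
    (hM : M.PosDef) :
    ∃ c > (0 : ℝ), ∀ x : Fin n → ℝ, c * ‖x‖ ^ 2 ≤ x ⬝ᵥ (M *ᵥ x) := by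
  rcases eq_or_ne n 0 with hn | hn
  · refine ⟨1, one_pos, fun x => ?_⟩
    have hx : x = 0 := by subst hn; ext i; exact absurd i.2 (Nat.not_lt_zero _)
    simp [hx]
  · haveI : Nontrivial (Fin n → ℝ) :=
      ⟨0, fun _ => 1, fun h => one_ne_zero (congrFun h.symm ⟨0, Nat.pos_of_ne_zero hn⟩)⟩
    have hsph : (Metric.sphere (0 : Fin n → ℝ) 1).Nonempty :=
      NormedSpace.sphere_nonempty.2 zero_le_one
    have hcpt : IsCompact (Metric.sphere (0 : Fin n → ℝ) 1) :=
      isCompact_sphere 0 1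
    obtain ⟨u, hu, humin⟩ := hcpt.exists_isMinOn hsph
      ((quad_continuous M).continuousOn)
    set c := u ⬝ᵥ (M *ᵥ u) with hc
    have hu1 : ‖u‖ = 1 := by simpa using hu
    have hu0 : u ≠ 0 := fun h => by simp [h] at hu1
    have hcpos : 0 < c := by
      have := hM.dotProduct_mulVec_pos hu0
      simpa [hc] using this
    refine ⟨c, hcpos, fun x => ?_⟩
    rcases eq_or_ne x 0 with rfl | hx0
    · simp
    · have hxn : (0:ℝ) < ‖x‖ := norm_pos_iff.2 hx0
      set v := ‖x‖⁻¹ • x with hv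
      have hvs : v ∈ Metric.sphere (0 : Fin n → ℝ) 1 := by
        simp [hv, norm_smul, abs_of_pos (inv_pos.2 hxn), inv_mul_cancel₀ hxn.ne']
      have hle : u ⬝ᵥ (M *ᵥ u) ≤ v ⬝ᵥ (M *ᵥ v) := humin hvs
      have hquad : v ⬝ᵥ (M *ᵥ v) = ‖x‖⁻¹ ^ 2 * (x ⬝ᵥ (M *ᵥ x)) := by
        simp [hv, mulVec_smul, smul_dotProduct, dotProduct_smul, smul_eq_mul]
        ring
      rw [hquad] at hle
      have h2 : c * ‖x‖ ^ 2 ≤ ‖x‖⁻¹ ^ 2 * (x ⬝ᵥ (M *ᵥ x)) * ‖x‖ ^ 2 :=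
        mul_le_mul_of_nonneg_right hle (by positivity)
      calc c * ‖x‖ ^ 2 ≤ ‖x‖⁻¹ ^ 2 * (x ⬝ᵥ (M *ᵥ x)) * ‖x‖ ^ 2 := h2
        _ = x ⬝ᵥ (M *ᵥ x) := by
            field_simp

/-- If `Ψ = o(‖x‖)` at the origin and `ΔQ` is positive definite, then there is a sublevel
ellipsoid `{x | xᵀ P x ≤ α}` on which
`χ(x) = xᵀ ΔQ x - 2 Ψ(x)ᵀ P ΦL x - Ψ(x)ᵀ P Ψ(x)` is nonnegative. -/
theorem chi_nonneg_on_small_ellipsoid (n : ℕ)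
    (P ΔQ : Matrix (Fin n) (Fin n) ℝ)
    (hP : P.PosDef) (hΔQ : ΔQ.PosDef)
    (ΦL : Matrix (Fin n) (Fin n) ℝ)
    (Ψ : (Fin n → ℝ) → (Fin n → ℝ))
    (hΨ : Ψ =o[nhds 0] fun x => x) :
    ∃ α > (0 : ℝ), ∀ x : Fin n → ℝ, x ⬝ᵥ (P *ᵥ x) ≤ α →
      0 ≤ x ⬝ᵥ (ΔQ *ᵥ x) - 2 * (Ψ x ⬝ᵥ (P *ᵥ (ΦL *ᵥ x))) - Ψ x ⬝ᵥ (P *ᵥ Ψ x) := by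
  obtain ⟨cQ, hcQ, hQ⟩ := posdef_coercive hΔQ
  obtain ⟨cP, hcP, hPc⟩ := posdef_coercive hP
  obtain ⟨C1, hC1, hB1⟩ := bilin_bound (P * ΦL)
  obtain ⟨C2, hC2, hB2⟩ := bilin_bound P
  set C := max C1 C2 with hC
  have hCpos : 0 < C := lt_max_of_lt_left hC1
  set ε := min 1 (cQ / (3 * C)) with hε
  have hεpos : 0 < ε := lt_min one_pos (by positivity)
  have hε1 : ε ≤ 1 := min_le_left _ _
  have hεC : 3 * C * ε ≤ cQ := by
    have : ε ≤ cQ / (3 * C) := min_le_right _ _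
    calc 3 * C * ε ≤ 3 * C * (cQ / (3 * C)) := by
          exact mul_le_mul_of_nonneg_left this (by positivity)
      _ = cQ := by field_simp
  have hev : ∀ᶠ x in nhds (0 : Fin n → ℝ), ‖Ψ x‖ ≤ ε * ‖x‖ := hΨ.def hεpos
  obtain ⟨δ, hδpos, hδ⟩ := Metric.eventually_nhds_iff.1 hev
  refine ⟨cP * (δ / 2) ^ 2, by positivity, fun x hx => ?_⟩
  have hxnorm : ‖x‖ ≤ δ / 2 := by
    have h1 : cP * ‖x‖ ^ 2 ≤ cP * (δ / 2) ^ 2 := (hPc x).trans hx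
    have h2 : ‖x‖ ^ 2 ≤ (δ / 2) ^ 2 := le_of_mul_le_mul_left h1 hcP
    nlinarith [norm_nonneg x, hδpos]
  have hΨx : ‖Ψ x‖ ≤ ε * ‖x‖ := hδ (by rw [dist_zero_right]; linarith)
  have hrs : ‖Ψ x‖ * ‖x‖ ≤ ε * (‖x‖ * ‖x‖) := by nlinarith [norm_nonneg x]
  have hrr : ‖Ψ x‖ * ‖Ψ x‖ ≤ ε * (‖x‖ * ‖x‖) := by
    nlinarith [norm_nonneg x, norm_nonneg (Ψ x)]
  have e1 : |Ψ x ⬝ᵥ (P *ᵥ (ΦL *ᵥ x))| ≤ C1 * ‖Ψ x‖ * ‖x‖ := by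
    have := hB1 (Ψ x) x
    rwa [← Matrix.mulVec_mulVec] at this
  have e2 : |Ψ x ⬝ᵥ (P *ᵥ Ψ x)| ≤ C2 * ‖Ψ x‖ * ‖Ψ x‖ := hB2 _ _
  have hb1 : Ψ x ⬝ᵥ (P *ᵥ (ΦL *ᵥ x)) ≤ C * (ε * (‖x‖ * ‖x‖)) := by
    have h1 : Ψ x ⬝ᵥ (P *ᵥ (ΦL *ᵥ x)) ≤ C1 * ‖Ψ x‖ * ‖x‖ := (le_abs_self _).trans e1
    have h2 : C1 * ‖Ψ x‖ * ‖x‖ ≤ C * (‖Ψ x‖ * ‖x‖) := by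
      rw [mul_assoc]
      exact mul_le_mul_of_nonneg_right (le_max_left C1 C2) (by positivity)
    have h3 : C * (‖Ψ x‖ * ‖x‖) ≤ C * (ε * (‖x‖ * ‖x‖)) :=
      mul_le_mul_of_nonneg_left hrs hCpos.le
    linarith
  have hb2 : Ψ x ⬝ᵥ (P *ᵥ Ψ x) ≤ C * (ε * (‖x‖ * ‖x‖)) := by
    have h1 : Ψ x ⬝ᵥ (P *ᵥ Ψ x) ≤ C2 * ‖Ψ x‖ * ‖Ψ x‖ := (le_abs_self _).trans e2
    have h2 : C2 * ‖Ψ x‖ * ‖Ψ x‖ ≤ C * (‖Ψ x‖ * ‖Ψ x‖) := by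
      rw [mul_assoc]
      exact mul_le_mul_of_nonneg_right (le_max_right C1 C2) (by positivity)
    have h3 : C * (‖Ψ x‖ * ‖Ψ x‖) ≤ C * (ε * (‖x‖ * ‖x‖)) :=
      mul_le_mul_of_nonneg_left hrr hCpos.le
    linarith
  have hq : 3 * C * ε * (‖x‖ * ‖x‖) ≤ x ⬝ᵥ (ΔQ *ᵥ x) := by
    have h1 := hQ x
    have h2 : 3 * C * ε * (‖x‖ * ‖x‖) ≤ cQ * (‖x‖ * ‖x‖) := by
      nlinarith [norm_nonneg x]
    nlinarith [norm_nonneg x]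
  linarith
end

section
/- Let Φ_L be a real n×n matrix, let P, W_x, ΔQ be symmetric positive definite real n×n matrices, let W_u be a symmetric positive definite real n_u×n_u matrix, and let L be a real n_u×n matrix such that Φ_Lᵀ P Φ_L − P = −(W_x + Lᵀ W_u L + ΔQ). Let g : ℝⁿ → ℝⁿ, define Ψ(x) := g(x) − Φ_L x, and let α > 0 be such that for all x in Ω := {x ∈ ℝⁿ : xᵀ P x ≤ α}, one has χ(x) := xᵀ ΔQ x − 2 Ψ(x)ᵀ P Φ_L x − Ψ(x)ᵀ P Ψ(x) ≥ 0. Then Ω is invariant under g (i.e., g(Ω) ⊆ Ω), and for every trajectory x : ℕ → ℝⁿ with x(k+1) = g(x(k)) and x(0) ∈ Ω, the series Σ_{k=0}^{∞} ( x(k)ᵀ W_x x(k) + (L x(k))ᵀ W_u (L x(k)) ) converges with sum at most x(0)ᵀ P x(0). -/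
open Matrix

/-- If `P` solves the modified Lyapunov equation `ΦLᵀ P ΦL - P = -(Wx + Lᵀ Wu L + ΔQ)` and the
correction term `χ` is nonnegative on the ellipsoid `Ω = {x | xᵀ P x ≤ α}`, then `Ω` is
invariant under the closed-loop map `g`, and along every trajectory starting in `Ω` the
infinite-horizon stage cost converges with sum at most `x(0)ᵀ P x(0)`. -/
theorem terminal_region_invariance_and_cost_bound (n nu : ℕ)
    (ΦL P Wx ΔQ : Matrix (Fin n) (Fin n) ℝ)
    (Wu : Matrix (Fin nu) (Fin nu) ℝ)
    (L : Matrix (Fin nu) (Fin n) ℝ)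
    (hP : P.PosDef) (hWx : Wx.PosDef) (hΔQ : ΔQ.PosDef) (hWu : Wu.PosDef)
    (hLyap : ΦLᵀ * P * ΦL - P = -(Wx + Lᵀ * Wu * L + ΔQ))
    (g : (Fin n → ℝ) → (Fin n → ℝ))
    (α : ℝ) (hα : 0 < α)
    (Ω : Set (Fin n → ℝ)) (hΩ : Ω = {x : Fin n → ℝ | x ⬝ᵥ (P *ᵥ x) ≤ α})
    (hχ : ∀ x ∈ Ω,
      0 ≤ x ⬝ᵥ (ΔQ *ᵥ x) - 2 * ((g x - ΦL *ᵥ x) ⬝ᵥ (P *ᵥ (ΦL *ᵥ x)))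
          - (g x - ΦL *ᵥ x) ⬝ᵥ (P *ᵥ (g x - ΦL *ᵥ x))) :
    (∀ x ∈ Ω, g x ∈ Ω) ∧
      ∀ x : ℕ → Fin n → ℝ, (∀ k, x (k + 1) = g (x k)) → x 0 ∈ Ω →
        Summable (fun k => (x k) ⬝ᵥ (Wx *ᵥ x k) + (L *ᵥ x k) ⬝ᵥ (Wu *ᵥ (L *ᵥ x k))) ∧
        ∑' k, ((x k) ⬝ᵥ (Wx *ᵥ x k) + (L *ᵥ x k) ⬝ᵥ (Wu *ᵥ (L *ᵥ x k)))
          ≤ (x 0) ⬝ᵥ (P *ᵥ x 0) := by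
  -- quadratic form nonnegativity helpers
  have hquad : ∀ (M : Matrix (Fin n) (Fin n) ℝ), M.PosDef → ∀ v : Fin n → ℝ,
      0 ≤ v ⬝ᵥ (M *ᵥ v) := by
    intro M hM v
    simpa using hM.posSemidef.dotProduct_mulVec_nonneg v
  have hquadu : ∀ v : Fin nu → ℝ, 0 ≤ v ⬝ᵥ (Wu *ᵥ v) := by
    intro v; simpa using hWu.posSemidef.dotProduct_mulVec_nonneg v
  -- adjoint relation for the dot product
  have hadjn : ∀ (A : Matrix (Fin n) (Fin n) ℝ) (u w : Fin n → ℝ),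
      (A *ᵥ u) ⬝ᵥ w = u ⬝ᵥ (Aᵀ *ᵥ w) := by
    intro A u w
    rw [dotProduct_comm, dotProduct_mulVec, dotProduct_comm u, mulVec_transpose]
  have hadju : ∀ (A : Matrix (Fin nu) (Fin n) ℝ) (u : Fin n → ℝ) (w : Fin nu → ℝ),
      (A *ᵥ u) ⬝ᵥ w = u ⬝ᵥ (Aᵀ *ᵥ w) := by
    intro A u w
    rw [dotProduct_comm, dotProduct_mulVec, dotProduct_comm u, mulVec_transpose]
  have hPt : Pᵀ = P := by
    have := hP.isHermitian.eq
    simpa using this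
  -- symmetry of P
  have hPsymm : ∀ u v : Fin n → ℝ, u ⬝ᵥ (P *ᵥ v) = v ⬝ᵥ (P *ᵥ u) := by
    intro u v
    rw [dotProduct_comm, hadjn P v u, hPt]
  -- the key Lyapunov decrease identity
  have hkey : ∀ v : Fin n → ℝ,
      (g v) ⬝ᵥ (P *ᵥ g v)
        = v ⬝ᵥ (P *ᵥ v) - (v ⬝ᵥ (Wx *ᵥ v) + (L *ᵥ v) ⬝ᵥ (Wu *ᵥ (L *ᵥ v)))
          - (v ⬝ᵥ (ΔQ *ᵥ v) - 2 * ((g v - ΦL *ᵥ v) ⬝ᵥ (P *ᵥ (ΦL *ᵥ v)))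
            - (g v - ΦL *ᵥ v) ⬝ᵥ (P *ᵥ (g v - ΦL *ᵥ v))) := by
    intro v
    have hgv : g v = (g v - ΦL *ᵥ v) + ΦL *ᵥ v := by ring_nf
    set ψ := g v - ΦL *ᵥ v with hψ
    set y := ΦL *ᵥ v with hy
    have h2 : ΦLᵀ * P * ΦL = P - (Wx + Lᵀ * Wu * L + ΔQ) := by
      have h := hLyap
      rw [sub_eq_iff_eq_add] at h
      rw [h]; abel
    have hyy : y ⬝ᵥ (P *ᵥ y) = v ⬝ᵥ (P *ᵥ v)
        - (v ⬝ᵥ (Wx *ᵥ v) + (L *ᵥ v) ⬝ᵥ (Wu *ᵥ (L *ᵥ v))) - v ⬝ᵥ (ΔQ *ᵥ v) := by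
      have h1 : y ⬝ᵥ (P *ᵥ y) = v ⬝ᵥ ((ΦLᵀ * P * ΦL) *ᵥ v) := by
        rw [hy, hadjn ΦL v, mulVec_mulVec, mulVec_mulVec, Matrix.mul_assoc]
      have h3 : v ⬝ᵥ ((Lᵀ * Wu * L) *ᵥ v) = (L *ᵥ v) ⬝ᵥ (Wu *ᵥ (L *ᵥ v)) := by
        rw [hadju L v, mulVec_mulVec, mulVec_mulVec, Matrix.mul_assoc]
      rw [h1, h2, sub_mulVec, add_mulVec, add_mulVec, dotProduct_sub, dotProduct_add,
        dotProduct_add, h3]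
      ring
    have hcross : ψ ⬝ᵥ (P *ᵥ y) = y ⬝ᵥ (P *ᵥ ψ) := hPsymm ψ y
    calc (g v) ⬝ᵥ (P *ᵥ g v) = (ψ + y) ⬝ᵥ (P *ᵥ (ψ + y)) := by rw [← hgv]
      _ = ψ ⬝ᵥ (P *ᵥ ψ) + ψ ⬝ᵥ (P *ᵥ y) + y ⬝ᵥ (P *ᵥ ψ) + y ⬝ᵥ (P *ᵥ y) := by
          simp only [mulVec_add, add_dotProduct, dotProduct_add]
          ring
      _ = _ := by rw [← hcross, hyy]; ring
  -- invariance
  have hinv : ∀ v ∈ Ω, g v ∈ Ω := by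
    intro v hv
    have hχv := hχ v hv
    have hdec : (g v) ⬝ᵥ (P *ᵥ g v) ≤ v ⬝ᵥ (P *ᵥ v) := by
      rw [hkey v]
      have h1 := hquad Wx hWx v
      have h2 := hquadu (L *ᵥ v)
      linarith
    rw [hΩ] at hv ⊢
    exact le_trans hdec hv
  refine ⟨hinv, ?_⟩
  intro x hx hx0
  -- every point of the trajectory stays in Ω
  have hmem : ∀ k, x k ∈ Ω := by
    intro k
    induction k with
    | zero => exact hx0
    | succ k ih => rw [hx k]; exact hinv _ ih
  set f : ℕ → ℝ := fun k => (x k) ⬝ᵥ (Wx *ᵥ x k) + (L *ᵥ x k) ⬝ᵥ (Wu *ᵥ (L *ᵥ x k)) with hf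
  have hfnn : ∀ k, 0 ≤ f k := fun k => add_nonneg (hquad Wx hWx _) (hquadu _)
  have hVnn : ∀ k, 0 ≤ (x k) ⬝ᵥ (P *ᵥ x k) := fun k => hquad P hP _
  -- telescoping bound on partial sums
  have hsum : ∀ N, ∑ k ∈ Finset.range N, f k ≤ (x 0) ⬝ᵥ (P *ᵥ x 0) := by
    intro N
    have htel : ∀ N, ∑ k ∈ Finset.range N, f k
        ≤ (x 0) ⬝ᵥ (P *ᵥ x 0) - (x N) ⬝ᵥ (P *ᵥ x N) := by
      intro N
      induction N with
      | zero => simp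
      | succ N ih =>
        rw [Finset.sum_range_succ, hx N]
        have hk := hkey (x N)
        have hχN := hχ (x N) (hmem N)
        have : f N ≤ (x N) ⬝ᵥ (P *ᵥ x N) - (g (x N)) ⬝ᵥ (P *ᵥ g (x N)) := by
          rw [hk]; simp only [hf]; linarith
        linarith
    have := htel N
    have := hVnn N
    linarith
  exact ⟨summable_of_sum_range_le hfnn hsum, Real.tsum_le_of_sum_range_le hfnn hsum⟩
end

section
/- (Lemma 1, arbitrary controller based approach.) Let F : ℝ^{n_x} × ℝ^{n_u} → ℝ^{n_x} be twice continuously differentiable with F(0,0) = 0, let U ⊆ ℝ^{n_u} contain the origin in its interior, and let W_x, ΔQ be symmetric positive definite n_x×n_x matrices and W_u a symmetric positive definite n_u×n_u matrix. Let L be a real n_u×n_x matrix, set Φ := ∂F/∂x(0,0), Γ := ∂F/∂u(0,0), Φ_L := Φ − Γ L, and suppose P is a symmetric positive definite n_x×n_x matrix solving the modified Lyapunov equation Φ_Lᵀ P Φ_L − P = −(W_x + Lᵀ W_u L + ΔQ). Then there exists a constant α > 0 such that, with Ω := {x ∈ ℝ^{n_x} : xᵀ P x ≤ α}: (i) −L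 x ∈ U for every x ∈ Ω; (ii) F(x, −L x) ∈ Ω for every x ∈ Ω, so Ω is an invariant set for the closed-loop system x(k+1) = F(x(k), −L x(k)); and (iii) for every trajectory of this closed-loop system with x(0) ∈ Ω, the series Σ_{k=0}^{∞} ( x(k)ᵀ W_x x(k) + (L x(k))ᵀ W_u (L x(k)) ) converges with sum at most x(0)ᵀ P x(0). -/
open Matrix

set_option maxHeartbeats 1000000

noncomputable def mvC {m n : ℕ} (M : Matrix (Fin m) (Fin n) ℝ) : (Fin n → ℝ) →L[ℝ] (Fin m → ℝ) :=
  LinearMap.toContinuousLinearMap M.mulVecLin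

lemma mvC_apply {m n : ℕ} (M : Matrix (Fin m) (Fin n) ℝ) (x : Fin n → ℝ) : mvC M x = M *ᵥ x := rfl

lemma norm_mulVec_le' {m n : ℕ} (M : Matrix (Fin m) (Fin n) ℝ) (x : Fin n → ℝ) :
    ‖M *ᵥ x‖ ≤ ‖mvC M‖ * ‖x‖ := by
  rw [← mvC_apply]; exact (mvC M).le_opNorm x

lemma abs_dot_le (n : ℕ) (x y : Fin n → ℝ) : |x ⬝ᵥ y| ≤ n * ‖x‖ * ‖y‖ := by
  calc |x ⬝ᵥ y| ≤ ∑ i, |x i * y i| := Finset.abs_sum_le_sum_abs _ _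
  _ ≤ ∑ _i : Fin n, ‖x‖ * ‖y‖ := by
      refine Finset.sum_le_sum fun i _ => ?_
      rw [abs_mul]
      exact mul_le_mul (norm_le_pi_norm x i) (norm_le_pi_norm y i) (abs_nonneg _) (norm_nonneg _)
  _ = n * ‖x‖ * ‖y‖ := by simp [mul_assoc]

lemma quad_comp {n m : ℕ} (B : Matrix (Fin m) (Fin n) ℝ) (P : Matrix (Fin m) (Fin m) ℝ)
    (x : Fin n → ℝ) : x ⬝ᵥ ((Bᵀ * P * B) *ᵥ x) = (B *ᵥ x) ⬝ᵥ (P *ᵥ (B *ᵥ x)) := by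
  rw [← Matrix.mulVec_mulVec, ← Matrix.mulVec_mulVec, dotProduct_mulVec, vecMul_transpose]

lemma quad_smul {n : ℕ} (Q : Matrix (Fin n) (Fin n) ℝ) (t : ℝ) (v : Fin n → ℝ) :
    (t • v) ⬝ᵥ Q *ᵥ (t • v) = t ^ 2 * (v ⬝ᵥ Q *ᵥ v) := by
  simp [mulVec_smul, smul_dotProduct, dotProduct_smul, smul_eq_mul]; ring

lemma quad_cont {n : ℕ} (Q : Matrix (Fin n) (Fin n) ℝ) :
    Continuous fun x : Fin n → ℝ => x ⬝ᵥ Q *ᵥ x := by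
  have : (fun x : Fin n → ℝ => x ⬝ᵥ Q *ᵥ x) = fun x => ∑ i, x i * (mvC Q x i) := rfl
  rw [this]
  refine continuous_finset_sum _ fun i _ => ?_
  exact (continuous_apply i).mul ((continuous_apply i).comp (mvC Q).continuous)

lemma posdef_pos {n : ℕ} {Q : Matrix (Fin n) (Fin n) ℝ} (hQ : Q.PosDef) {x : Fin n → ℝ}
    (hx : x ≠ 0) : 0 < x ⬝ᵥ Q *ᵥ x := by
  have := hQ.dotProduct_mulVec_pos hx; simpa using this

lemma posdef_nonneg {n : ℕ} {Q : Matrix (Fin n) (Fin n) ℝ} (hQ : Q.PosDef) (x : Fin n → ℝ) :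
    0 ≤ x ⬝ᵥ Q *ᵥ x := by
  rcases eq_or_ne x 0 with rfl | hx
  · simp
  · exact (posdef_pos hQ hx).le

lemma posdef_lower {n : ℕ} {Q : Matrix (Fin n) (Fin n) ℝ} (hQ : Q.PosDef) :
    ∃ c > 0, ∀ x : Fin n → ℝ, c * ‖x‖ ^ 2 ≤ x ⬝ᵥ Q *ᵥ x := by
  rcases Nat.eq_zero_or_pos n with h0 | hn
  · subst h0
    refine ⟨1, one_pos, fun x => ?_⟩
    have h1 : ‖x‖ = 0 := by rw [Subsingleton.elim x 0]; exact norm_zero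
    have h2 : x ⬝ᵥ Q *ᵥ x = 0 := by simp [dotProduct]
    rw [h1, h2]; norm_num
  · haveI : Nonempty (Fin n) := Fin.pos_iff_nonempty.mp hn
    have hsph : IsCompact (Metric.sphere (0 : Fin n → ℝ) 1) := isCompact_sphere _ _
    have hne : (Metric.sphere (0 : Fin n → ℝ) 1).Nonempty := by
      refine ⟨fun _ => 1, ?_⟩
      simp [Metric.mem_sphere, dist_zero_right]
    obtain ⟨u, hu, hmin'⟩ := hsph.exists_isMinOn hne (quad_cont Q).continuousOn
    have hu1 : ‖u‖ = 1 := by simpa using hu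
    have hu0 : u ≠ 0 := fun h => by simp [h] at hu1
    refine ⟨u ⬝ᵥ Q *ᵥ u, posdef_pos hQ hu0, fun x => ?_⟩
    rcases eq_or_ne x 0 with rfl | hx
    · simp
    · have hnx : 0 < ‖x‖ := norm_pos_iff.mpr hx
      have hv1 : ‖(‖x‖⁻¹ • x)‖ = 1 := by
        rw [norm_smul, norm_inv, norm_norm, inv_mul_cancel₀ hnx.ne']
      have h1 : u ⬝ᵥ Q *ᵥ u ≤ (‖x‖⁻¹ • x) ⬝ᵥ Q *ᵥ (‖x‖⁻¹ • x) :=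
        hmin' (by simpa [Metric.mem_sphere, dist_zero_right] using hv1)
      calc (u ⬝ᵥ Q *ᵥ u) * ‖x‖ ^ 2 ≤ ((‖x‖⁻¹ • x) ⬝ᵥ Q *ᵥ (‖x‖⁻¹ • x)) * ‖x‖ ^ 2 :=
            mul_le_mul_of_nonneg_right h1 (by positivity)
      _ = x ⬝ᵥ Q *ᵥ x := by rw [quad_smul]; field_simp



/-- Lemma 1 (arbitrary controller based approach): for a twice continuously differentiable
system `F` with equilibrium at the origin, input constraint set `U` with `0` in its interior,
and terminal penalty `P` solving `ΦLᵀ P ΦL - P = -(Wx + Lᵀ Wu L + ΔQ)` where `ΦL = Φ - ΓL`,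
there exists `α > 0` such that on `Ω = {x | xᵀ P x ≤ α}`: the feedback `-Lx` is admissible,
`Ω` is invariant for the closed loop `x(k+1) = F(x(k), -L x(k))`, and the infinite-horizon
closed-loop stage cost is bounded by `x(0)ᵀ P x(0)`. -/
theorem lemma1_arbitrary_controller (nx nu : ℕ)
    (F : (Fin nx → ℝ) × (Fin nu → ℝ) → (Fin nx → ℝ))
    (hF : ContDiff ℝ 2 F) (hF0 : F (0, 0) = 0)
    (U : Set (Fin nu → ℝ)) (hU : (0 : Fin nu → ℝ) ∈ interior U)
    (Wx ΔQ : Matrix (Fin nx) (Fin nx) ℝ) (hWx : Wx.PosDef) (hΔQ : ΔQ.PosDef)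
    (Wu : Matrix (Fin nu) (Fin nu) ℝ) (hWu : Wu.PosDef)
    (L : Matrix (Fin nu) (Fin nx) ℝ)
    (Φ : Matrix (Fin nx) (Fin nx) ℝ) (Γ : Matrix (Fin nx) (Fin nu) ℝ)
    (hΦΓ : ∀ p : (Fin nx → ℝ) × (Fin nu → ℝ),
      fderiv ℝ F (0, 0) p = Φ *ᵥ p.1 + Γ *ᵥ p.2)
    (P : Matrix (Fin nx) (Fin nx) ℝ) (hP : P.PosDef)
    (hLyap : (Φ - Γ * L)ᵀ * P * (Φ - Γ * L) - P = -(Wx + Lᵀ * Wu * L + ΔQ)) :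
    ∃ α > (0 : ℝ),
      (∀ x : Fin nx → ℝ, x ⬝ᵥ (P *ᵥ x) ≤ α → -(L *ᵥ x) ∈ U) ∧
      (∀ x : Fin nx → ℝ, x ⬝ᵥ (P *ᵥ x) ≤ α →
        (F (x, -(L *ᵥ x))) ⬝ᵥ (P *ᵥ F (x, -(L *ᵥ x))) ≤ α) ∧
      ∀ x : ℕ → Fin nx → ℝ, (∀ k, x (k + 1) = F (x k, -(L *ᵥ x k))) →
        (x 0) ⬝ᵥ (P *ᵥ x 0) ≤ α →
        Summable (fun k => (x k) ⬝ᵥ (Wx *ᵥ x k) + (L *ᵥ x k) ⬝ᵥ (Wu *ᵥ (L *ᵥ x k))) ∧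
        ∑' k, ((x k) ⬝ᵥ (Wx *ᵥ x k) + (L *ᵥ x k) ⬝ᵥ (Wu *ᵥ (L *ᵥ x k)))
          ≤ (x 0) ⬝ᵥ (P *ᵥ x 0) := by
  classical
  set A := Φ - Γ * L with hA
  set g : (Fin nx → ℝ) → (Fin nx → ℝ) := fun x => F (x, -(L *ᵥ x)) with hg
  have hg0 : g 0 = 0 := by
    rw [hg]; simp only [Matrix.mulVec_zero, neg_zero]; exact hF0
  -- the closed-loop linearization
  let j : (Fin nx → ℝ) →L[ℝ] ((Fin nx → ℝ) × (Fin nu → ℝ)) :=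
    (ContinuousLinearMap.id ℝ _).prod (-(mvC L))
  have hj : ∀ z, j z = (z, -(L *ᵥ z)) := fun z => rfl
  have hj0 : j 0 = (0, 0) := by rw [hj]; simp
  have hDF : HasFDerivAt F (fderiv ℝ F (0, 0)) (0, 0) :=
    ((hF.differentiable (by norm_num)) (0, 0)).hasFDerivAt
  have hcomp : HasFDerivAt (fun z => F (j z)) ((fderiv ℝ F (0, 0)).comp j) 0 := by
    refine HasFDerivAt.comp 0 ?_ j.hasFDerivAt
    rw [hj0]; exact hDF
  have hfeq : (fun z => F (j z)) = g := by funext z; rw [hj]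
  rw [hfeq] at hcomp
  have hderiv_eq : ((fderiv ℝ F (0, 0)).comp j) = mvC A := by
    refine ContinuousLinearMap.ext fun z => ?_
    rw [ContinuousLinearMap.comp_apply, hj, hΦΓ, mvC_apply, hA]
    simp [sub_mulVec, ← mulVec_mulVec, mulVec_neg]
    abel
  rw [hderiv_eq] at hcomp
  have hlo : (fun z => g z - A *ᵥ z) =o[nhds 0] (fun z => z) := by
    have := hcomp.isLittleO
    simpa [hg0, mvC_apply] using this
  obtain ⟨c, hc, hlow⟩ := posdef_lower hΔQ
  obtain ⟨cP, hcP, hlowP⟩ := posdef_lower hP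
  have hCP : (0:ℝ) ≤ ‖mvC P‖ := norm_nonneg _
  have hCA : (0:ℝ) ≤ ‖mvC A‖ := norm_nonneg _
  have hCL : (0:ℝ) ≤ ‖mvC L‖ := norm_nonneg _
  set CP := ‖mvC P‖
  set CA := ‖mvC A‖
  set CL := ‖mvC L‖
  have hD1 : (0:ℝ) < nx * CP * (2 * CA + 1) + 1 := by positivity
  set ε := min 1 (c / (nx * CP * (2 * CA + 1) + 1)) with hεdef
  have hεpos : 0 < ε := lt_min one_pos (div_pos hc hD1)
  have hε1 : ε ≤ 1 := min_le_left _ _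
  have hεc : ε * (nx * CP * (2 * CA + 1) + 1) ≤ c := by
    have := min_le_right 1 (c / (nx * CP * (2 * CA + 1) + 1))
    calc ε * (nx * CP * (2 * CA + 1) + 1)
        ≤ (c / (nx * CP * (2 * CA + 1) + 1)) * (nx * CP * (2 * CA + 1) + 1) :=
          mul_le_mul_of_nonneg_right this hD1.le
      _ = c := div_mul_cancel₀ c hD1.ne'
  -- get δ from little-o
  have hev : ∀ᶠ z in nhds (0 : Fin nx → ℝ), ‖g z - A *ᵥ z‖ ≤ ε * ‖z‖ := hlo.def hεpos
  obtain ⟨δ, hδpos, hδ⟩ := Metric.eventually_nhds_iff.mp hev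
  -- key decrease inequality
  have key : ∀ x : Fin nx → ℝ, ‖x‖ < δ →
      g x ⬝ᵥ P *ᵥ g x + (x ⬝ᵥ Wx *ᵥ x + (L *ᵥ x) ⬝ᵥ Wu *ᵥ (L *ᵥ x)) ≤ x ⬝ᵥ P *ᵥ x := by
    intro x hx
    have he : ‖g x - A *ᵥ x‖ ≤ ε * ‖x‖ := hδ (by simpa [dist_zero_right] using hx)
    set y := A *ᵥ x with hy'
    set e := g x - y with he'
    have hy : ‖y‖ ≤ CA * ‖x‖ := norm_mulVec_le' A x
    have hgx : g x = y + e := by rw [he']; abel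
    have hexp : g x ⬝ᵥ P *ᵥ g x
        = y ⬝ᵥ (P *ᵥ y) + (y ⬝ᵥ (P *ᵥ e) + e ⬝ᵥ (P *ᵥ y) + e ⬝ᵥ (P *ᵥ e)) := by
      rw [hgx]
      simp [mulVec_add, dotProduct_add, add_dotProduct]
      ring
    have hlyap2 : Aᵀ * P * A = P - (Wx + Lᵀ * Wu * L + ΔQ) := by
      have h := hLyap
      rw [sub_eq_iff_eq_add] at h
      rw [h]; abel
    have hyPy : y ⬝ᵥ (P *ᵥ y) = x ⬝ᵥ P *ᵥ x
        - (x ⬝ᵥ Wx *ᵥ x + (L *ᵥ x) ⬝ᵥ Wu *ᵥ (L *ᵥ x)) - x ⬝ᵥ ΔQ *ᵥ x := by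
      have h1 := quad_comp A P x
      have h2 := quad_comp L Wu x
      rw [hy', ← h1, hlyap2, sub_mulVec, add_mulVec, add_mulVec, dotProduct_sub,
        dotProduct_add, dotProduct_add, h2]
      ring
    have hPe : ‖P *ᵥ e‖ ≤ CP * (ε * ‖x‖) :=
      (norm_mulVec_le' P e).trans (mul_le_mul_of_nonneg_left he hCP)
    have hPy : ‖P *ᵥ y‖ ≤ CP * (CA * ‖x‖) :=
      (norm_mulVec_le' P y).trans (mul_le_mul_of_nonneg_left hy hCP)
    have hb1 : y ⬝ᵥ (P *ᵥ e) ≤ nx * ((CA * ‖x‖) * (CP * (ε * ‖x‖))) := by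
      refine (le_abs_self _).trans ((abs_dot_le nx y (P *ᵥ e)).trans ?_)
      rw [mul_assoc]
      refine mul_le_mul_of_nonneg_left ?_ (by positivity)
      exact mul_le_mul hy hPe (norm_nonneg _) (by positivity)
    have hb2 : e ⬝ᵥ (P *ᵥ y) ≤ nx * ((ε * ‖x‖) * (CP * (CA * ‖x‖))) := by
      refine (le_abs_self _).trans ((abs_dot_le nx e (P *ᵥ y)).trans ?_)
      rw [mul_assoc]
      refine mul_le_mul_of_nonneg_left ?_ (by positivity)
      exact mul_le_mul he hPy (norm_nonneg _) (by positivity)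
    have hb3 : e ⬝ᵥ (P *ᵥ e) ≤ nx * ((ε * ‖x‖) * (CP * (ε * ‖x‖))) := by
      refine (le_abs_self _).trans ((abs_dot_le nx e (P *ᵥ e)).trans ?_)
      rw [mul_assoc]
      refine mul_le_mul_of_nonneg_left ?_ (by positivity)
      exact mul_le_mul he hPe (norm_nonneg _) (by positivity)
    have hRle : y ⬝ᵥ (P *ᵥ e) + e ⬝ᵥ (P *ᵥ y) + e ⬝ᵥ (P *ᵥ e) ≤ c * ‖x‖ ^ 2 := by
      have hfac : nx * ((CA * ‖x‖) * (CP * (ε * ‖x‖))) + nx * ((ε * ‖x‖) * (CP * (CA * ‖x‖)))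
          + nx * ((ε * ‖x‖) * (CP * (ε * ‖x‖)))
          = (nx * CP * (2 * CA * ε + ε * ε)) * ‖x‖ ^ 2 := by ring
      have hstep : (nx * CP * (2 * CA * ε + ε * ε)) ≤ c := by
        have h1 : 2 * CA * ε + ε * ε ≤ (2 * CA + 1) * ε := by nlinarith
        calc nx * CP * (2 * CA * ε + ε * ε) ≤ nx * CP * ((2 * CA + 1) * ε) :=
              mul_le_mul_of_nonneg_left h1 (by positivity)
          _ = ε * (nx * CP * (2 * CA + 1)) := by ring
          _ ≤ ε * (nx * CP * (2 * CA + 1) + 1) := by nlinarith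
          _ ≤ c := hεc
      calc y ⬝ᵥ (P *ᵥ e) + e ⬝ᵥ (P *ᵥ y) + e ⬝ᵥ (P *ᵥ e)
          ≤ (nx * CP * (2 * CA * ε + ε * ε)) * ‖x‖ ^ 2 := by
            rw [← hfac]; linarith
        _ ≤ c * ‖x‖ ^ 2 := mul_le_mul_of_nonneg_right hstep (by positivity)
    have hQx := hlow x
    linarith [hexp, hyPy, hRle, hQx]
  -- choose α
  obtain ⟨ρ, hρpos, hρ⟩ := Metric.mem_nhds_iff.mp (mem_interior_iff_mem_nhds.mp hU)
  have hCL1 : (0:ℝ) < CL + 1 := by positivity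
  set δ' := min δ (ρ / (CL + 1)) with hδ'def
  have hδ'pos : 0 < δ' := lt_min hδpos (div_pos hρpos hCL1)
  refine ⟨cP * δ' ^ 2 / 2, by positivity, ?_, ?_, ?_⟩
  · -- admissibility of -Lx
    intro x hx
    have hn : ‖x‖ < δ' := by
      have h1 := hlowP x
      have h2 : ‖x‖ ^ 2 < δ' ^ 2 := by nlinarith [mul_pos hcP (pow_pos hδ'pos 2)]
      nlinarith [norm_nonneg x, hδ'pos.le]
    have h1 : ‖L *ᵥ x‖ ≤ CL * ‖x‖ := norm_mulVec_le' L x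
    have h2 : ‖x‖ < ρ / (CL + 1) := lt_of_lt_of_le hn (min_le_right _ _)
    have h2' : ‖x‖ * (CL + 1) < ρ := (lt_div_iff₀ hCL1).mp h2
    have h3 : ‖L *ᵥ x‖ < ρ := by nlinarith [norm_nonneg x]
    apply hρ
    simp only [Metric.mem_ball, dist_zero_right, norm_neg]
    exact h3
  · -- invariance
    intro x hx
    have hn : ‖x‖ < δ' := by
      have h1 := hlowP x
      have h2 : ‖x‖ ^ 2 < δ' ^ 2 := by nlinarith [mul_pos hcP (pow_pos hδ'pos 2)]
      nlinarith [norm_nonneg x, hδ'pos.le]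
    have h := key x (lt_of_lt_of_le hn (min_le_left _ _))
    have s1 := posdef_nonneg hWx x
    have s2 := posdef_nonneg hWu (L *ᵥ x)
    simp only [hg] at h
    linarith
  · -- infinite-horizon cost bound
    intro x hrec hx0
    have hstnn : ∀ k, 0 ≤ (x k) ⬝ᵥ (Wx *ᵥ x k) + (L *ᵥ x k) ⬝ᵥ (Wu *ᵥ (L *ᵥ x k)) :=
      fun k => add_nonneg (posdef_nonneg hWx _) (posdef_nonneg hWu _)
    have hVdec : ∀ k, x k ⬝ᵥ P *ᵥ x k ≤ cP * δ' ^ 2 / 2 →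
        x (k+1) ⬝ᵥ P *ᵥ x (k+1)
          + ((x k) ⬝ᵥ (Wx *ᵥ x k) + (L *ᵥ x k) ⬝ᵥ (Wu *ᵥ (L *ᵥ x k)))
          ≤ x k ⬝ᵥ P *ᵥ x k := by
      intro k hk
      have hn : ‖x k‖ < δ' := by
        have h1 := hlowP (x k)
        have h2 : ‖x k‖ ^ 2 < δ' ^ 2 := by
          nlinarith [mul_pos hcP (pow_pos hδ'pos 2)]
        nlinarith [norm_nonneg (x k), hδ'pos.le]
      have h := key (x k) (lt_of_lt_of_le hn (min_le_left _ _))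
      simp only [hg] at h
      rw [hrec k]
      exact h
    have hVinv : ∀ k, x k ⬝ᵥ P *ᵥ x k ≤ cP * δ' ^ 2 / 2 := by
      intro k; induction k with
      | zero => exact hx0
      | succ n ih =>
        have h1 := hVdec n ih
        have h2 := hstnn n
        linarith
    have hple : ∀ N, ∑ k ∈ Finset.range N,
        ((x k) ⬝ᵥ (Wx *ᵥ x k) + (L *ᵥ x k) ⬝ᵥ (Wu *ᵥ (L *ᵥ x k)))
        ≤ x 0 ⬝ᵥ P *ᵥ x 0 := by
      have hpartial : ∀ N, ∑ k ∈ Finset.range N,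
          ((x k) ⬝ᵥ (Wx *ᵥ x k) + (L *ᵥ x k) ⬝ᵥ (Wu *ᵥ (L *ᵥ x k)))
          + x N ⬝ᵥ P *ᵥ x N ≤ x 0 ⬝ᵥ P *ᵥ x 0 := by
        intro N; induction N with
        | zero => simp
        | succ n ih =>
          rw [Finset.sum_range_succ]
          have h1 := hVdec n (hVinv n)
          linarith
      intro N
      have h1 := hpartial N
      have h2 := posdef_nonneg hP (x N)
      linarith
    exact ⟨summable_of_sum_range_le hstnn hple,
      Real.tsum_le_of_sum_range_le hstnn hple⟩
end

section
/- (Lemma 2, LQR based approach.) Let F : ℝ^{n_x} × ℝ^{n_u} → ℝ^{n_x} be twice continuously differentiable with F(0,0) = 0, let U ⊆ ℝ^{n_u} contain the origin in its interior, and let W_x, W̃_x be symmetric n_x×n_x matrices and W_u, W̃_u symmetric n_u×n_u matrices with W_x, W_u positive definite, W̃_x − W_x positive definite, and W̃_u − W_u positive definite. Set Φ := ∂F/∂x(0,0) and Γ := ∂F/∂u(0,0). Suppose P is a symmetric positive definite matrix and L a real n_u×n_x matrix such that, with Φ_L := Φ − Γ L, (a) Φ_Lᵀ P Φ_L − P =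 −(W̃_x + Lᵀ W̃_u L), and (b) the matrix W̃_u + Γᵀ P Γ is invertible and L = (W̃_u + Γᵀ P Γ)⁻¹ Γᵀ P Φ. Then there exists α > 0 such that, with Ω := {x ∈ ℝ^{n_x} : xᵀ P x ≤ α}: (i) −L x ∈ U for every x ∈ Ω; (ii) F(x, −L x) ∈ Ω for every x ∈ Ω, so Ω is an invariant set for the closed-loop system x(k+1) = F(x(k), −L x(k)); and (iii) for every trajectory of this closed-loop system with x(0) ∈ Ω, the series Σ_{k=0}^{∞} ( x(k)ᵀ W_x x(k) + (L x(k))ᵀ W_u (L x(k)) ) converges with sum at most x(0)ᵀ P x(0). -/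
open Matrix

private lemma lemma2_aux_dot {n : ℕ} (x y : Fin n → ℝ) : |x ⬝ᵥ y| ≤ n * ‖x‖ * ‖y‖ := by
  calc |x ⬝ᵥ y| ≤ ∑ i, |x i * y i| := Finset.abs_sum_le_sum_abs _ _
    _ ≤ ∑ _i : Fin n, ‖x‖ * ‖y‖ := by
        apply Finset.sum_le_sum
        intro i _
        rw [abs_mul]
        have h1 : |x i| ≤ ‖x‖ := by rw [← Real.norm_eq_abs]; exact norm_le_pi_norm x i
        have h2 : |y i| ≤ ‖y‖ := by rw [← Real.norm_eq_abs]; exact norm_le_pi_norm y i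
        exact mul_le_mul h1 h2 (abs_nonneg _) (norm_nonneg _)
    _ = n * ‖x‖ * ‖y‖ := by simp [mul_assoc]

private lemma lemma2_aux_bound {m n : ℕ} (M : Matrix (Fin m) (Fin n) ℝ) :
    ∃ C ≥ 0, ∀ x, ‖M *ᵥ x‖ ≤ C * ‖x‖ := by
  let f := LinearMap.toContinuousLinearMap (Matrix.mulVecLin M)
  exact ⟨‖f‖, norm_nonneg f, fun x => f.le_opNorm x⟩

private lemma lemma2_aux_posdef {n : ℕ} (M : Matrix (Fin n) (Fin n) ℝ) (hM : M.PosDef) :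
    ∃ c > 0, ∀ x : Fin n → ℝ, c * ‖x‖ ^ 2 ≤ x ⬝ᵥ (M *ᵥ x) := by
  have hpos : ∀ x : Fin n → ℝ, x ≠ 0 → 0 < x ⬝ᵥ (M *ᵥ x) := by
    intro x hx; simpa using hM.dotProduct_mulVec_pos hx
  have hcont : Continuous fun x : Fin n → ℝ => x ⬝ᵥ (M *ᵥ x) := by
    simp only [dotProduct, Matrix.mulVec]
    fun_prop
  rcases Nat.eq_zero_or_pos n with hn | hn
  · refine ⟨1, one_pos, fun x => ?_⟩
    have hx : x = 0 := by
      subst hn; ext i; exact absurd i.2 (by omega)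
    simp [hx]
  · have : Nonempty (Fin n) := ⟨⟨0, hn⟩⟩
    have hsne : (Metric.sphere (0 : Fin n → ℝ) 1).Nonempty := by
      refine ⟨fun _ => 1, ?_⟩
      simp [pi_norm_const]
    obtain ⟨z, hz, hmin⟩ := (isCompact_sphere (0 : Fin n → ℝ) 1).exists_isMinOn hsne
      hcont.continuousOn
    have hz1 : ‖z‖ = 1 := by simpa using hz
    have hzne : z ≠ 0 := by intro h; rw [h] at hz1; simp at hz1
    refine ⟨z ⬝ᵥ (M *ᵥ z), hpos z hzne, fun x => ?_⟩
    rcases eq_or_ne x 0 with rfl | hx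
    · simp
    · have hnx : 0 < ‖x‖ := norm_pos_iff.mpr hx
      set y : Fin n → ℝ := ‖x‖⁻¹ • x with hy
      have hyn : ‖y‖ = 1 := by
        rw [hy, norm_smul]; simp [abs_of_pos hnx, inv_mul_cancel₀ hnx.ne']
      have hys : y ∈ Metric.sphere (0 : Fin n → ℝ) 1 := by simp [hyn]
      have hxy : x = ‖x‖ • y := by
        rw [hy, smul_smul, mul_inv_cancel₀ hnx.ne', one_smul]
      have hquad : x ⬝ᵥ (M *ᵥ x) = ‖x‖ ^ 2 * (y ⬝ᵥ (M *ᵥ y)) := by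
        conv_lhs => rw [hxy]
        rw [smul_dotProduct, mulVec_smul, dotProduct_smul, smul_eq_mul, smul_eq_mul]
        ring
      rw [hquad]
      have : z ⬝ᵥ (M *ᵥ z) ≤ y ⬝ᵥ (M *ᵥ y) := hmin hys
      nlinarith [sq_nonneg ‖x‖]

private lemma lemma2_aux_quad {m n : ℕ} (A : Matrix (Fin m) (Fin n) ℝ)
    (M : Matrix (Fin m) (Fin m) ℝ) (x : Fin n → ℝ) :
    x ⬝ᵥ ((Aᵀ * M * A) *ᵥ x) = (A *ᵥ x) ⬝ᵥ (M *ᵥ (A *ᵥ x)) := by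
  rw [← Matrix.mulVec_mulVec, ← Matrix.mulVec_mulVec, Matrix.dotProduct_mulVec x Aᵀ,
    Matrix.vecMul_transpose]

set_option maxHeartbeats 2000000 in
/-- Lemma 2 (LQR based approach): if `P` and `L` solve the Riccati-type pair
`ΦLᵀ P ΦL - P = -(W̃x + Lᵀ W̃u L)` and `L = (W̃u + Γᵀ P Γ)⁻¹ Γᵀ P Φ` with enlarged weighting
matrices `W̃x > Wx`, `W̃u > Wu`, then there exists `α > 0` such that on
`Ω = {x | xᵀ P x ≤ α}`: the feedback `-Lx` is admissible, `Ω` is invariant for the closed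
loop `x(k+1) = F(x(k), -L x(k))`, and the infinite-horizon closed-loop stage cost is bounded
by `x(0)ᵀ P x(0)`. -/
theorem lemma2_lqr_based (nx nu : ℕ)
    (F : (Fin nx → ℝ) × (Fin nu → ℝ) → (Fin nx → ℝ))
    (hF : ContDiff ℝ 2 F) (hF0 : F (0, 0) = 0)
    (U : Set (Fin nu → ℝ)) (hU : (0 : Fin nu → ℝ) ∈ interior U)
    (Wx tWx : Matrix (Fin nx) (Fin nx) ℝ) (hWxs : Wx.IsSymm) (htWxs : tWx.IsSymm)
    (Wu tWu : Matrix (Fin nu) (Fin nu) ℝ) (hWus : Wu.IsSymm) (htWus : tWu.IsSymm)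
    (hWx : Wx.PosDef) (hWu : Wu.PosDef)
    (hdx : (tWx - Wx).PosDef) (hdu : (tWu - Wu).PosDef)
    (Φ : Matrix (Fin nx) (Fin nx) ℝ) (Γ : Matrix (Fin nx) (Fin nu) ℝ)
    (hΦΓ : ∀ p : (Fin nx → ℝ) × (Fin nu → ℝ),
      fderiv ℝ F (0, 0) p = Φ *ᵥ p.1 + Γ *ᵥ p.2)
    (P : Matrix (Fin nx) (Fin nx) ℝ) (hP : P.PosDef)
    (L : Matrix (Fin nu) (Fin nx) ℝ)
    (hLyap : (Φ - Γ * L)ᵀ * P * (Φ - Γ * L) - P = -(tWx + Lᵀ * tWu * L))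
    (hInv : IsUnit (tWu + Γᵀ * P * Γ))
    (hL : L = (tWu + Γᵀ * P * Γ)⁻¹ * (Γᵀ * P * Φ)) :
    ∃ α > (0 : ℝ),
      (∀ x : Fin nx → ℝ, x ⬝ᵥ (P *ᵥ x) ≤ α → -(L *ᵥ x) ∈ U) ∧
      (∀ x : Fin nx → ℝ, x ⬝ᵥ (P *ᵥ x) ≤ α →
        (F (x, -(L *ᵥ x))) ⬝ᵥ (P *ᵥ F (x, -(L *ᵥ x))) ≤ α) ∧
      ∀ x : ℕ → Fin nx → ℝ, (∀ k, x (k + 1) = F (x k, -(L *ᵥ x k))) →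
        (x 0) ⬝ᵥ (P *ᵥ x 0) ≤ α →
        Summable (fun k => (x k) ⬝ᵥ (Wx *ᵥ x k) + (L *ᵥ x k) ⬝ᵥ (Wu *ᵥ (L *ᵥ x k))) ∧
        ∑' k, ((x k) ⬝ᵥ (Wx *ᵥ x k) + (L *ᵥ x k) ⬝ᵥ (Wu *ᵥ (L *ᵥ x k)))
          ≤ (x 0) ⬝ᵥ (P *ᵥ x 0) := by
  clear hInv hL hWxs htWxs hWus htWus
  obtain ⟨cP, hcP, hPlow⟩ := lemma2_aux_posdef P hP
  obtain ⟨μ, hμ, hΔlow⟩ := lemma2_aux_posdef _ hdx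
  obtain ⟨cdu, hcdu, hdulow⟩ := lemma2_aux_posdef _ hdu
  obtain ⟨cWx, hcWx, hWxlow⟩ := lemma2_aux_posdef _ hWx
  obtain ⟨cWu, hcWu, hWulow⟩ := lemma2_aux_posdef _ hWu
  obtain ⟨CL, hCL0, hCLb⟩ := lemma2_aux_bound L
  obtain ⟨CA, hCA0, hCAb⟩ := lemma2_aux_bound (Φ - Γ * L)
  obtain ⟨CPm, hCPm0, hCPmb⟩ := lemma2_aux_bound P
  set CP : ℝ := (nx : ℝ) * CPm + 1 with hCPdef
  have hCP0 : 0 < CP := by positivity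
  have hPdot : ∀ u v : Fin nx → ℝ, |u ⬝ᵥ (P *ᵥ v)| ≤ CP * ‖u‖ * ‖v‖ := by
    intro u v
    calc |u ⬝ᵥ (P *ᵥ v)| ≤ nx * ‖u‖ * ‖P *ᵥ v‖ := lemma2_aux_dot u (P *ᵥ v)
      _ ≤ nx * ‖u‖ * (CPm * ‖v‖) := by
          have := hCPmb v
          have h0 : (0:ℝ) ≤ (nx:ℝ) * ‖u‖ := by positivity
          exact mul_le_mul_of_nonneg_left this h0
      _ ≤ CP * ‖u‖ * ‖v‖ := by
          have h1 : (nx:ℝ) * CPm ≤ CP := by rw [hCPdef]; linarith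
          nlinarith [norm_nonneg u, norm_nonneg v, mul_nonneg (norm_nonneg u) (norm_nonneg v)]
  have hPs : Pᵀ = P := by
    have := hP.1
    rwa [Matrix.IsHermitian, conjTranspose_eq_transpose_of_trivial] at this
  have hswap : ∀ u v : Fin nx → ℝ, u ⬝ᵥ (P *ᵥ v) = v ⬝ᵥ (P *ᵥ u) := by
    intro u v
    rw [Matrix.dotProduct_mulVec, ← Matrix.mulVec_transpose, hPs, dotProduct_comm]
  set ε : ℝ := min 1 (μ / (2 * CP * CA + CP + 1)) with hεdef
  have hεpos : 0 < ε := by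
    apply lt_min one_pos
    positivity
  have hε1 : ε ≤ 1 := min_le_left _ _
  have hεμ : (2 * CP * CA + CP) * ε ≤ μ := by
    have h1 : ε ≤ μ / (2 * CP * CA + CP + 1) := min_le_right _ _
    have h2 : (0:ℝ) < 2 * CP * CA + CP + 1 := by positivity
    rw [le_div_iff₀ h2] at h1
    nlinarith [hεpos.le]
  -- little-o bound
  obtain ⟨δ, hδ, hb⟩ : ∃ δ > 0, ∀ y : Fin nx → ℝ, ‖y‖ < δ →
      ‖F (y, -(L *ᵥ y)) - (Φ - Γ * L) *ᵥ y‖ ≤ ε * ‖y‖ := by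
    set T : (Fin nx → ℝ) →L[ℝ] (Fin nx → ℝ) × (Fin nu → ℝ) :=
      (ContinuousLinearMap.id ℝ _).prod (-(LinearMap.toContinuousLinearMap (Matrix.mulVecLin L)))
      with hT
    have hTval : ∀ y, T y = (y, -(L *ᵥ y)) := fun y => rfl
    have hDF : HasFDerivAt F (fderiv ℝ F (0,0)) ((0,0) : (Fin nx → ℝ) × (Fin nu → ℝ)) :=
      ((hF.differentiable (by norm_num)) _).hasFDerivAt
    have hT0 : T 0 = ((0,0) : (Fin nx → ℝ) × (Fin nu → ℝ)) := by
      rw [hTval]; simp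
    have hDF' : HasFDerivAt F (fderiv ℝ F (0,0)) (T 0) := hT0 ▸ hDF
    have hcomp : HasFDerivAt (fun y => F (T y)) ((fderiv ℝ F (0,0)).comp T) 0 :=
      hDF'.comp 0 T.hasFDerivAt
    have hg : HasFDerivAt (fun y => F (y, -(L *ᵥ y))) ((fderiv ℝ F (0,0)).comp T) 0 := by
      simpa only [hTval] using hcomp
    have hval : ∀ y, ((fderiv ℝ F (0,0)).comp T) y = (Φ - Γ * L) *ᵥ y := by
      intro y
      rw [ContinuousLinearMap.comp_apply, hTval, hΦΓ]
      simp [Matrix.sub_mulVec, Matrix.add_mulVec, Matrix.neg_mulVec, Matrix.mulVec_neg,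
        ← Matrix.mulVec_mulVec, sub_eq_add_neg]
    have hlo := hg.isLittleO
    have hev := hlo.def hεpos
    rw [Metric.eventually_nhds_iff] at hev
    obtain ⟨δ, hδ, hbb⟩ := hev
    refine ⟨δ, hδ, fun y hy => ?_⟩
    have := hbb (show dist y 0 < δ by simpa [dist_zero_right] using hy)
    simp only [hval, sub_zero] at this
    rw [show F (0, -(L *ᵥ (0:Fin nx → ℝ))) = 0 by simpa using hF0] at this
    simpa [dist_zero_right] using this
  -- ball inside U
  obtain ⟨ρ, hρ, hball⟩ : ∃ ρ > 0, Metric.ball (0 : Fin nu → ℝ) ρ ⊆ U := by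
    have hUnhds : interior U ∈ nhds (0 : Fin nu → ℝ) := isOpen_interior.mem_nhds hU
    obtain ⟨ρ, hρ, hsub⟩ := Metric.mem_nhds_iff.mp hUnhds
    exact ⟨ρ, hρ, hsub.trans interior_subset⟩
  set δ' : ℝ := min (δ / 2) (ρ / (2 * (CL + 1))) with hδ'def
  have hδ'pos : 0 < δ' := by
    apply lt_min (by linarith)
    positivity
  refine ⟨cP * δ' ^ 2, by positivity, ?_⟩
  set α : ℝ := cP * δ' ^ 2 with hαdef
  have hmem : ∀ x : Fin nx → ℝ, x ⬝ᵥ (P *ᵥ x) ≤ α → ‖x‖ ≤ δ' := by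
    intro x hx
    have h1 := hPlow x
    have h2 : cP * ‖x‖ ^ 2 ≤ cP * δ' ^ 2 := le_trans h1 hx
    have h3 : ‖x‖ ^ 2 ≤ δ' ^ 2 := le_of_mul_le_mul_left h2 hcP
    nlinarith [norm_nonneg x, hδ'pos.le]
  have hVnn : ∀ x : Fin nx → ℝ, 0 ≤ x ⬝ᵥ (P *ᵥ x) := fun x =>
    le_trans (by positivity) (hPlow x)
  have hsnn : ∀ x : Fin nx → ℝ,
      0 ≤ x ⬝ᵥ (Wx *ᵥ x) + (L *ᵥ x) ⬝ᵥ (Wu *ᵥ (L *ᵥ x)) := by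
    intro x
    have h1 := le_trans (by positivity) (hWxlow x)
    have h2 := le_trans (by positivity) (hWulow (L *ᵥ x))
    linarith
  -- key decrease inequality
  have key : ∀ x : Fin nx → ℝ, x ⬝ᵥ (P *ᵥ x) ≤ α →
      (F (x, -(L *ᵥ x))) ⬝ᵥ (P *ᵥ F (x, -(L *ᵥ x))) ≤
        x ⬝ᵥ (P *ᵥ x) - (x ⬝ᵥ (Wx *ᵥ x) + (L *ᵥ x) ⬝ᵥ (Wu *ᵥ (L *ᵥ x))) := by
    intro x hx
    have hnx := hmem x hx
    have hnxδ : ‖x‖ < δ := lt_of_le_of_lt (hnx.trans (min_le_left _ _)) (by linarith)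
    set gx := F (x, -(L *ᵥ x)) with hgxdef
    set y := (Φ - Γ * L) *ᵥ x with hydef
    set r := gx - y with hrdef
    have hgx : gx = y + r := by rw [hrdef]; abel
    have hrb : ‖r‖ ≤ ε * ‖x‖ := hb x hnxδ
    have hAx : ‖y‖ ≤ CA * ‖x‖ := hCAb x
    have hlyap2 : (Φ - Γ * L)ᵀ * P * (Φ - Γ * L) = P - (tWx + Lᵀ * tWu * L) := by
      have h := sub_eq_iff_eq_add.mp hLyap
      rw [h]; abel
    have hyPy : y ⬝ᵥ (P *ᵥ y) =
        x ⬝ᵥ (P *ᵥ x) - x ⬝ᵥ (tWx *ᵥ x) - (L *ᵥ x) ⬝ᵥ (tWu *ᵥ (L *ᵥ x)) := by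
      have h1 : y ⬝ᵥ (P *ᵥ y) = x ⬝ᵥ (((Φ - Γ * L)ᵀ * P * (Φ - Γ * L)) *ᵥ x) :=
        (lemma2_aux_quad (Φ - Γ * L) P x).symm
      have h2 : x ⬝ᵥ ((Lᵀ * tWu * L) *ᵥ x) = (L *ᵥ x) ⬝ᵥ (tWu *ᵥ (L *ᵥ x)) :=
        lemma2_aux_quad L tWu x
      rw [h1, hlyap2, Matrix.sub_mulVec, dotProduct_sub, Matrix.add_mulVec,
        dotProduct_add, h2]
      ring
    have hexp : gx ⬝ᵥ (P *ᵥ gx) =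
        y ⬝ᵥ (P *ᵥ y) + 2 * (y ⬝ᵥ (P *ᵥ r)) + r ⬝ᵥ (P *ᵥ r) := by
      rw [hgx, Matrix.mulVec_add, dotProduct_add, add_dotProduct,
        add_dotProduct, hswap r y]
      ring
    have e1 : |y ⬝ᵥ (P *ᵥ r)| ≤ CP * (CA * ‖x‖) * (ε * ‖x‖) := by
      calc |y ⬝ᵥ (P *ᵥ r)| ≤ CP * ‖y‖ * ‖r‖ := hPdot y r
        _ ≤ CP * (CA * ‖x‖) * (ε * ‖x‖) := by
            have h1 : CP * ‖y‖ ≤ CP * (CA * ‖x‖) := mul_le_mul_of_nonneg_left hAx hCP0.le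
            have h2 : 0 ≤ CP * (CA * ‖x‖) := by positivity
            exact mul_le_mul h1 hrb (norm_nonneg r) h2
    have e2 : |r ⬝ᵥ (P *ᵥ r)| ≤ CP * (ε * ‖x‖) * (ε * ‖x‖) := by
      calc |r ⬝ᵥ (P *ᵥ r)| ≤ CP * ‖r‖ * ‖r‖ := hPdot r r
        _ ≤ CP * (ε * ‖x‖) * (ε * ‖x‖) := by
            have h1 : CP * ‖r‖ ≤ CP * (ε * ‖x‖) := mul_le_mul_of_nonneg_left hrb hCP0.le
            have h2 : 0 ≤ CP * (ε * ‖x‖) := by positivity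
            exact mul_le_mul h1 hrb (norm_nonneg r) h2
    have ecross : 2 * (y ⬝ᵥ (P *ᵥ r)) + r ⬝ᵥ (P *ᵥ r) ≤ μ * ‖x‖ ^ 2 := by
      have a1 := (abs_le.mp e1).2
      have a2 := (abs_le.mp e2).2
      have h3 : CP * (ε * ‖x‖) * (ε * ‖x‖) ≤ CP * ε * ‖x‖ ^ 2 := by
        have hnn : (0:ℝ) ≤ CP * ε * ‖x‖ ^ 2 * (1 - ε) :=
          mul_nonneg (by positivity) (by linarith)
        nlinarith [hnn]
      have h4 : ((2 * CP * CA + CP) * ε) * ‖x‖ ^ 2 ≤ μ * ‖x‖ ^ 2 :=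
        mul_le_mul_of_nonneg_right hεμ (sq_nonneg _)
      nlinarith
    have hΔ : μ * ‖x‖ ^ 2 ≤ x ⬝ᵥ ((tWx - Wx) *ᵥ x) := hΔlow x
    have hduq : 0 ≤ (L *ᵥ x) ⬝ᵥ ((tWu - Wu) *ᵥ (L *ᵥ x)) :=
      le_trans (by positivity) (hdulow (L *ᵥ x))
    rw [Matrix.sub_mulVec, dotProduct_sub] at hΔ hduq
    rw [hexp, hyPy]
    linarith
  refine ⟨?_, ?_, ?_⟩
  · -- admissibility
    intro x hx
    have hnx := hmem x hx
    have hδ'ρ : δ' ≤ ρ / (2 * (CL + 1)) := min_le_right _ _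
    apply hball
    rw [Metric.mem_ball, dist_zero_right, norm_neg]
    have h1 : ‖L *ᵥ x‖ ≤ CL * ‖x‖ := hCLb x
    have h2 : CL * ‖x‖ ≤ CL * δ' := mul_le_mul_of_nonneg_left hnx hCL0
    have h3 : CL * δ' ≤ CL * (ρ / (2 * (CL + 1))) := mul_le_mul_of_nonneg_left hδ'ρ hCL0
    have h4 : CL * (ρ / (2 * (CL + 1))) < ρ := by
      rw [mul_div_assoc']
      rw [div_lt_iff₀ (by positivity)]
      nlinarith
    linarith
  · -- invariance
    intro x hx
    have := key x hx
    have := hsnn x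
    linarith
  · -- summability and bound
    intro x hrec hx0
    set s : ℕ → ℝ := fun k => (x k) ⬝ᵥ (Wx *ᵥ x k) + (L *ᵥ x k) ⬝ᵥ (Wu *ᵥ (L *ᵥ x k))
      with hsdef
    have hmemk : ∀ k, (x k) ⬝ᵥ (P *ᵥ x k) ≤ α := by
      intro k
      induction k with
      | zero => exact hx0
      | succ k ih =>
          rw [hrec k]
          have h1 := key (x k) ih
          have h2 := hsnn (x k)
          linarith
    have hdec : ∀ k, s k ≤ (x k) ⬝ᵥ (P *ᵥ x k) - (x (k+1)) ⬝ᵥ (P *ᵥ x (k+1)) := by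
      intro k
      have h1 := key (x k) (hmemk k)
      rw [← hrec k] at h1
      simp only [hsdef]
      linarith
    have hpartial : ∀ N, ∑ k ∈ Finset.range N, s k ≤ (x 0) ⬝ᵥ (P *ᵥ x 0) := by
      intro N
      have h : ∑ k ∈ Finset.range N, s k ≤
          (x 0) ⬝ᵥ (P *ᵥ x 0) - (x N) ⬝ᵥ (P *ᵥ x N) := by
        induction N with
        | zero => simp
        | succ N ih =>
            rw [Finset.sum_range_succ]
            have := hdec N
            linarith
      have := hVnn (x N)
      linarith
    have hsum : Summable s := summable_of_sum_range_le (fun k => hsnn (x k)) hpartial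
    exact ⟨hsum, Summable.tsum_le_of_sum_range_le hsum hpartial⟩
end
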